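/- Let A be a graded polynomial algebra in finitely many variables over a field F, M a finitely generated graded A-module, and N ⊆ M a graded A-submodule. Then N is finitely generated, and for all sufficiently large l the degree-(l+1) component of N equals A_1 times its degree-l component. -/

import Mathlib

open MvPolynomial

/-- Auxiliary: a homogeneous polynomial of degree `d + 1` acting on a homogeneous
element of `N` of degree `k` lands in the span of `A_1`-multiples of homogeneous
elements of `N` of degree `d + k`. -/
lemma aux_monomial_decomp {n : ℕ} (s : Fin n →₀ ℕ)
    (hs : s.degree ≠ 0) :
    ∃ (i : Fin n) (s' : Fin n →₀ ℕ), Finsupp.single i 1 + s' = s ∧ s'.degree + 1 = s.degree := by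
  classical
  have hne : s ≠ 0 := fun h => hs (h ▸ map_zero Finsupp.degree)
  obtain ⟨i, hi⟩ : ∃ i, s i ≠ 0 := by
    by_contra h
    push_neg at h
    exact hne (Finsupp.ext fun j => h j)
  refine ⟨i, s - Finsupp.single i 1, ?_, ?_⟩
  · ext j
    by_cases hji : j = i
    · subst hji
      simp [Finsupp.single_apply, Nat.one_add_sub_one, Nat.add_sub_cancel' (Nat.one_le_iff_ne_zero.mpr hi)]
    · simp [Finsupp.single_apply, Ne.symm hji, hji]
  · have h1 : Finsupp.degree (Finsupp.single i 1 + (s - Finsupp.single i 1)) = s.degree := by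
      congr 1
      ext j
      by_cases hji : j = i
      · subst hji
        simp [Finsupp.single_apply, Nat.add_sub_cancel' (Nat.one_le_iff_ne_zero.mpr hi)]
      · simp [Finsupp.single_apply, Ne.symm hji, hji]
    rw [← h1, Finsupp.degree_eq_weight_one, map_add]
    have : (Finsupp.weight 1) (Finsupp.single i 1) = 1 := by
      simp [Finsupp.weight_apply, Finsupp.sum_single_index]
    rw [show ((Finsupp.weight fun _ => 1) (Finsupp.single i 1) : ℕ) = 1 from this, ← Finsupp.degree_eq_weight_one, add_comm]

/-- Over a field `F`, let `M = ⊕ M_l` be a finitely generated graded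
module over `A = F[X_1,…,X_n]` and `N ⊆ M` a graded `A`-submodule (i.e. `N` is the
supremum of its homogeneous pieces `N_l = N ∩ M_l`). Then `N` is finitely generated
and for all sufficiently large `l` one has `N_{l+1} = A_1 · N_l`. -/
theorem graded_submodule_fg_and_top_degree_generation
    {F : Type*} [Field F] {n : ℕ} {M : Type*} [AddCommGroup M]
    [Module F M] [Module (MvPolynomial (Fin n) F) M]
    [IsScalarTower F (MvPolynomial (Fin n) F) M]
    (ℳ : ℕ → Submodule F M)
    (hdecomp : DirectSum.IsInternal ℳ)
    (hsmul : ∀ (i l : ℕ), ∀ p ∈ MvPolynomial.homogeneousSubmodule (Fin n) F i,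
      ∀ m ∈ ℳ l, p • m ∈ ℳ (i + l))
    (hfg : Module.Finite (MvPolynomial (Fin n) F) M)
    (N : Submodule (MvPolynomial (Fin n) F) M)
    (hgraded : N.restrictScalars F = ⨆ l : ℕ, (N.restrictScalars F ⊓ ℳ l)) :
    N.FG ∧
    ∃ L : ℕ, ∀ l ≥ L,
      N.restrictScalars F ⊓ ℳ (l + 1) = Submodule.span F
        {x : M | ∃ p ∈ MvPolynomial.homogeneousSubmodule (Fin n) F 1,
          ∃ m ∈ N.restrictScalars F ⊓ ℳ l, x = p • m} := by
  classical
  set A := MvPolynomial (Fin n) F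
  letI : DirectSum.Decomposition ℳ := hdecomp.chooseDecomposition
  have hNfg : N.FG := IsNoetherian.noetherian N
  refine ⟨hNfg, ?_⟩
  obtain ⟨S, hS⟩ := hNfg
  -- for each generator pick a finsupp decomposition into homogeneous pieces
  have hpieces : ∀ s ∈ (S : Set M), ∃ f : ℕ →₀ M,
      (∀ i, f i ∈ N.restrictScalars F ⊓ ℳ i) ∧ (f.sum fun _ x => x) = s := by
    intro s hsS
    have hsN : s ∈ N.restrictScalars F := by
      rw [← hS]
      exact Submodule.subset_span hsS
    rw [hgraded] at hsN
    exact (Submodule.mem_iSup_iff_exists_finsupp _ s).mp hsN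
  choose! f hf1 hf2 using hpieces
  -- the degree bound
  set L0 : ℕ := S.sup (fun s => (f s).support.sup id) with hL0
  -- the graded pieces generated in degrees ≤ L0
  set G : ℕ → Submodule F M := fun j => Submodule.span F
    {x : M | ∃ k ≤ L0, ∃ d, d + k = j ∧ ∃ q ∈ MvPolynomial.homogeneousSubmodule (Fin n) F d,
      ∃ m ∈ N.restrictScalars F ⊓ ℳ k, x = q • m} with hG
  have hGℳ : ∀ j, G j ≤ ℳ j := by
    intro j
    rw [hG]
    refine Submodule.span_le.mpr ?_
    rintro x ⟨k, hk, d, hdk, q, hq, m, hm, rfl⟩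
    exact hdk ▸ hsmul d k q hq m hm.2
  have hGN : ∀ j, G j ≤ N.restrictScalars F := by
    intro j
    rw [hG]
    refine Submodule.span_le.mpr ?_
    rintro x ⟨k, hk, d, hdk, q, hq, m, hm, rfl⟩
    exact Submodule.smul_mem N q hm.1
  -- homogeneous multiplication maps G j into G (d + j)
  have hsmulG : ∀ d (q : A), q ∈ MvPolynomial.homogeneousSubmodule (Fin n) F d →
      ∀ j, ∀ x ∈ G j, q • x ∈ G (d + j) := by
    intro d q hq j x hx
    induction hx using Submodule.span_induction with
    | mem x hxmem =>
      obtain ⟨k, hk, e, hek, q', hq', m, hm, rfl⟩ := hxmem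
      refine Submodule.subset_span ⟨k, hk, d + e, by omega, q * q', ?_, m, hm, ?_⟩
      · exact MvPolynomial.homogeneousSubmodule_mul d e (Submodule.mul_mem_mul hq hq')
      · rw [mul_smul]
    | zero => simpa using Submodule.zero_mem _
    | add x y hxm hym hx hy => rw [smul_add]; exact Submodule.add_mem _ hx hy
    | smul c x hxm hx => rw [smul_comm]; exact Submodule.smul_mem _ c hx
  -- arbitrary multiplication preserves ⨆ G
  have hsmulSup : ∀ (p : A) (x : M), x ∈ (⨆ j, G j) → p • x ∈ ⨆ j, G j := by
    intro p x hx
    have hhomog : ∀ d (q : A), q ∈ MvPolynomial.homogeneousSubmodule (Fin n) F d →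
        q • x ∈ ⨆ j, G j := by
      intro d q hq
      refine Submodule.iSup_induction (motive := fun y => q • y ∈ ⨆ j, G j) G hx ?_ ?_ ?_
      · intro j y hy
        exact Submodule.mem_iSup_of_mem (d + j) (hsmulG d q hq j y hy)
      · simpa using Submodule.zero_mem _
      · intro y z hy hz
        rw [smul_add]
        exact Submodule.add_mem _ hy hz
    have hp : p = ∑ i ∈ Finset.range (p.totalDegree + 1), MvPolynomial.homogeneousComponent i p :=
      (MvPolynomial.sum_homogeneousComponent p).symm
    rw [hp, Finset.sum_smul]
    exact Submodule.sum_mem _ fun i _ =>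
      hhomog i _ (MvPolynomial.homogeneousComponent_isHomogeneous i p)
  -- N is contained in ⨆ G
  have hNle : ∀ x ∈ N, x ∈ ⨆ j, G j := by
    intro x hx
    rw [← hS] at hx
    induction hx using Submodule.span_induction with
    | mem s hsS =>
      rw [← hf2 s hsS]
      refine Submodule.sum_mem _ ?_
      intro i hi
      refine Submodule.mem_iSup_of_mem i ?_
      refine Submodule.subset_span ⟨i, ?_, 0, zero_add i, 1, ?_, f s i, hf1 s hsS i, (one_smul A _).symm⟩
      · have h1 : i ≤ (f s).support.sup id := Finset.le_sup (f := id) hi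
        exact le_trans h1 (Finset.le_sup (f := fun s => (f s).support.sup id) (Finset.mem_coe.mp hsS))
      · exact MvPolynomial.isHomogeneous_one _ _
    | zero => exact Submodule.zero_mem _
    | add x y hxm hym hx hy => exact Submodule.add_mem _ hx hy
    | smul p x hxm hx => exact hsmulSup p x hx
  -- key uniqueness: a homogeneous element of ⨆ G lies in its own piece
  have hkey : ∀ (j : ℕ) (y : M), y ∈ ℳ j → y ∈ (⨆ i, G i) → y ∈ G j := by
    intro j y hyℳ hy
    obtain ⟨g, hg, hgsum⟩ := (Submodule.mem_iSup_iff_exists_finsupp G y).mp hy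
    have hyeq : y = ∑ i ∈ g.support, g i := by rw [← hgsum]; rfl
    have hcomp : ((DirectSum.decompose ℳ y j : ℳ j) : M)
        = ∑ i ∈ g.support, ((DirectSum.decompose ℳ (g i) j : ℳ j) : M) := by
      conv_lhs => rw [hyeq]
      rw [DirectSum.decompose_sum]
      rw [DFinsupp.finset_sum_apply]
      exact AddSubmonoidClass.coe_finset_sum _ _
    have hysame : ((DirectSum.decompose ℳ y j : ℳ j) : M) = y :=
      DirectSum.decompose_of_mem_same ℳ hyℳ
    have hterm : ∀ i ∈ g.support, i ≠ j → ((DirectSum.decompose ℳ (g i) j : ℳ j) : M) = 0 := by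
      intro i _ hij
      exact DirectSum.decompose_of_mem_ne ℳ (hGℳ i (hg i)) hij
    have : y = g j := by
      rw [← hysame, hcomp]
      rw [Finset.sum_eq_single j]
      · exact DirectSum.decompose_of_mem_same ℳ (hGℳ j (hg j))
      · exact fun i hi hij => hterm i hi hij
      · intro hj
        rw [DirectSum.decompose_of_mem_same ℳ (hGℳ j (hg j))]
        exact (Finsupp.notMem_support_iff.mp hj).symm ▸ rfl
    exact this ▸ hg j
  -- conclusion
  refine ⟨L0, fun l hl => ?_⟩
  apply le_antisymm
  · -- N_{l+1} ≤ span of A_1 • N_l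
    intro y hy
    have hyG : y ∈ G (l + 1) := hkey (l + 1) y hy.2 (hNle y hy.1)
    -- now show G (l+1) ≤ RHS
    revert hyG
    refine fun hyG => Submodule.span_le.mpr ?_ hyG
    rintro x ⟨k, hk, d, hdk, q, hq, m, hm, rfl⟩
    have hd1 : 1 ≤ d := by omega
    -- expand q as a sum of monomials
    have hqsum : q = ∑ v ∈ q.support, MvPolynomial.monomial v (MvPolynomial.coeff v q) :=
      MvPolynomial.as_sum q
    rw [hqsum, Finset.sum_smul]
    refine Submodule.sum_mem _ ?_
    intro v hv
    have hqhom : q.IsHomogeneous d := (MvPolynomial.mem_homogeneousSubmodule _ _).mp hq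
    have hvdeg : v.degree = d := by
      have := hqhom (MvPolynomial.mem_support_iff.mp hv)
      rw [Finsupp.degree_eq_weight_one]; exact this
    obtain ⟨i, v', hv'1, hv'2⟩ := aux_monomial_decomp v (by omega)
    have hmon : (MvPolynomial.monomial v (MvPolynomial.coeff v q) : A)
        = MvPolynomial.X i * MvPolynomial.monomial v' (MvPolynomial.coeff v q) := by
      rw [← hv'1, MvPolynomial.monomial_single_add, pow_one]
    rw [hmon, mul_smul]
    refine Submodule.subset_span ?_
    refine ⟨MvPolynomial.X i, (MvPolynomial.mem_homogeneousSubmodule _ _).mpr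
      (MvPolynomial.isHomogeneous_X F i), MvPolynomial.monomial v' (MvPolynomial.coeff v q) • m,
      ⟨?_, ?_⟩, rfl⟩
    · exact Submodule.smul_mem N _ hm.1
    · have : v'.degree + k = l := by omega
      have h1 : (MvPolynomial.monomial v' (MvPolynomial.coeff v q) : A)
          ∈ MvPolynomial.homogeneousSubmodule (Fin n) F v'.degree :=
        (MvPolynomial.mem_homogeneousSubmodule _ _).mpr
          (MvPolynomial.isHomogeneous_monomial _ rfl)
      exact this ▸ hsmul v'.degree k _ h1 m hm.2
  · -- RHS ≤ N_{l+1}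
    refine Submodule.span_le.mpr ?_
    rintro x ⟨p, hp, m, hm, rfl⟩
    refine ⟨Submodule.smul_mem N p hm.1, ?_⟩
    have := hsmul 1 l p hp m hm.2
    rwa [add_comm] at this
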